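/- Let T ∈ U₁(H) have block data (A, x, y, a). Then for every z ∈ B_H one has ⟨y,z⟩ + a ≠ 0 and ‖(Az + x)/(⟨y,z⟩ + a)‖ < 1; that is, the generalized linear fractional transformation φ_T is a well-defined map from B_H into B_H. -/

import Mathlib

/-- The extended Hilbert space `H̃ = H ⊕ ℂ` (Hilbert space direct sum). -/
noncomputable abbrev ExtH (H : Type*) [NormedAddCommGroup H] [InnerProductSpace ℂ H] :=
  WithLp 2 (H × ℂ)

/-- The element `(z, a)` of `H̃`. -/
noncomputable def mk2 {H : Type*} [NormedAddCommGroup H] [InnerProductSpace ℂ H]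
    (z : H) (a : ℂ) : ExtH H :=
  (WithLp.equiv 2 (H × ℂ)).symm (z, a)

lemma mk2_inner {H : Type*} [NormedAddCommGroup H] [InnerProductSpace ℂ H]
    (z w : H) (a b : ℂ) :
    (inner ℂ (mk2 z a) (mk2 w b) : ℂ) = inner ℂ z w + inner ℂ a b := rfl

open ContinuousLinearMap in
/-- if `T ∈ U₁(H)` (i.e. `T* ∘ ε ∘ T = ε`) has block data `(A, x, y, a)`,
then for every `z` in the Hilbert ball one has `⟨y,z⟩ + a ≠ 0` and
`‖(Az + x)/(⟨y,z⟩ + a)‖ < 1`, so the generalized linear fractional transformation `φ_T`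
maps the Hilbert ball into itself. -/
theorem moebius_maps_ball_to_ball
    {H : Type*} [NormedAddCommGroup H] [InnerProductSpace ℂ H] [CompleteSpace H]
    (ε : ExtH H →L[ℂ] ExtH H) (hε : ∀ (z : H) (l : ℂ), ε (mk2 z l) = mk2 (-z) l)
    (T : ExtH H →L[ℂ] ExtH H) (hT : adjoint T ∘L ε ∘L T = ε)
    (A : H →L[ℂ] H) (x y : H) (a : ℂ)
    (hTblock : ∀ (z : H) (l : ℂ),
      T (mk2 z l) = mk2 (A z + l • x) ((inner ℂ y z : ℂ) + l * a)) :
    ∀ z : H, ‖z‖ < 1 →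
      ((inner ℂ y z : ℂ) + a ≠ 0 ∧ ‖((inner ℂ y z : ℂ) + a)⁻¹ • (A z + x)‖ < 1) := by
  intro z hz
  set c : ℂ := (inner ℂ y z : ℂ) + a with hc
  set v : H := A z + x with hv
  set u : ExtH H := mk2 z 1 with hu
  have hTu : T u = mk2 v c := by
    rw [hu, hTblock]
    simp [hv, hc]
  -- key identity
  have key : (inner ℂ (ε (T u)) (T u) : ℂ) = inner ℂ (ε u) u := by
    have := congrArg (fun S : ExtH H →L[ℂ] ExtH H => (inner ℂ (S u) u : ℂ)) hT
    simpa [ContinuousLinearMap.comp_apply, ContinuousLinearMap.adjoint_inner_left] using this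
  have hL : (inner ℂ (ε (T u)) (T u) : ℂ) = -(‖v‖^2 : ℝ) + (starRingEnd ℂ c) * c := by
    rw [hTu, hε, mk2_inner, inner_neg_left, inner_self_eq_norm_sq_to_K]
    norm_num [RCLike.inner_apply]
    exact (Complex.conj_mul' c).symm
  have hR : (inner ℂ (ε u) u : ℂ) = -(‖z‖^2 : ℝ) + 1 := by
    rw [hu, hε, mk2_inner, inner_neg_left, inner_self_eq_norm_sq_to_K]
    norm_num [RCLike.inner_apply]
  have habs : ‖c‖^2 - ‖v‖^2 = 1 - ‖z‖^2 := by
    have : (-(‖v‖^2 : ℝ) + (starRingEnd ℂ c) * c : ℂ) = -(‖z‖^2 : ℝ) + 1 := by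
      rw [← hL, key, hR]
    have hcc : (starRingEnd ℂ) c * c = ((‖c‖^2 : ℝ) : ℂ) := by
      rw [← Complex.normSq_eq_conj_mul_self, Complex.normSq_eq_norm_sq]
    have h2 : ((‖c‖^2 - ‖v‖^2 : ℝ) : ℂ) = ((1 - ‖z‖^2 : ℝ) : ℂ) := by
      push_cast at this hcc ⊢
      linear_combination this - hcc
    exact_mod_cast h2
  have hz2 : (0:ℝ) < 1 - ‖z‖^2 := by nlinarith [norm_nonneg z]
  have hlt : ‖v‖^2 < ‖c‖^2 := by linarith
  have hcne : c ≠ 0 := by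
    intro h
    rw [h] at hlt
    simp at hlt
    nlinarith [norm_nonneg v, sq_nonneg ‖v‖]
  refine ⟨hcne, ?_⟩
  have hcpos : 0 < ‖c‖ := norm_pos_iff.mpr hcne
  rw [norm_smul, norm_inv]
  rw [inv_mul_lt_iff₀ hcpos, mul_one]
  nlinarith [norm_nonneg v]
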